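/- Let G = (V, A) be a finite loopless directed graph, r ∈ V, c : A → ℚ non-negative, and let 𝓕 = {S ⊆ V \ {r} : A(S) ≠ ∅}. Suppose y assigns a non-negative rational y_S to each S ∈ 𝓕 and satisfies, for every arc e ∈ A, ∑_{S ∈ 𝓕 : e ∈ δ⁻(S)} y_S ≤ c(e). Then for every r-branching cover T of G, ∑_{S ∈ 𝓕} y_S ≤ ∑_{e ∈ T} c(e). -/

import Mathlib

/-- `δ⁻(S)`: the arcs of `A` entering `S` from outside. -/
def deltaMinus {V : Type*} [DecidableEq V] (A : Finset (V × V)) (S : Finset V) :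
    Finset (V × V) :=
  A.filter fun e => e.1 ∉ S ∧ e.2 ∈ S

/-- `Reaches F u v`: there is a directed path from `u` to `v` using only arcs of `F`. -/
def Reaches {V : Type*} (F : Finset (V × V)) (u v : V) : Prop :=
  Relation.ReflTransGen (fun a b => (a, b) ∈ F) u v

/-- `V(T)`: the set of end-nodes of the arcs in `T`. -/
def vertexSet {V : Type*} (T : Finset (V × V)) : Set V :=
  {v | ∃ e ∈ T, e.1 = v ∨ e.2 = v}

/-- A vertex cover: every arc has at least one endpoint in `U`. -/
def IsVertexCover {V : Type*} (A : Finset (V × V)) (U : Set V) : Prop :=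
  ∀ e ∈ A, e.1 ∈ U ∨ e.2 ∈ U

/-- An `r`-branching. -/
def IsBranching {V : Type*} [DecidableEq V] (A T : Finset (V × V)) (r : V) : Prop :=
  T ⊆ A ∧ (∀ v ∈ vertexSet T, Reaches T r v) ∧
    ∀ v : V, (T.filter fun e => e.2 = v).card ≤ 1

/-- An `r`-branching cover. -/
def IsBranchingCover {V : Type*} [DecidableEq V] (A T : Finset (V × V)) (r : V) : Prop :=
  IsBranching A T r ∧ IsVertexCover A (vertexSet T)

/-- weak duality: if `y` is a non-negative dual solution on
`𝓕 = {S ⊆ V \ {r} : A(S) ≠ ∅}` satisfying `∑_{S : e ∈ δ⁻(S)} y_S ≤ c(e)` for every arc `e`,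
then `∑_{S ∈ 𝓕} y_S` is at most the cost of every `r`-branching cover `T`. -/
theorem stmt1 {V : Type*} [Fintype V] [DecidableEq V]
    (A : Finset (V × V)) (hloop : ∀ e ∈ A, e.1 ≠ e.2) (r : V)
    (c : V × V → ℚ) (hc : ∀ e ∈ A, 0 ≤ c e)
    (𝓕 : Finset (Finset V))
    (h𝓕 : 𝓕 = Finset.univ.filter fun S : Finset V =>
      r ∉ S ∧ (A.filter fun e => e.1 ∈ S ∧ e.2 ∈ S).Nonempty)
    (y : Finset V → ℚ) (hy : ∀ S ∈ 𝓕, 0 ≤ y S)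
    (hfeas : ∀ e ∈ A, ∑ S ∈ 𝓕.filter (fun S => e ∈ deltaMinus A S), y S ≤ c e)
    (T : Finset (V × V)) (hT : IsBranchingCover A T r) :
    ∑ S ∈ 𝓕, y S ≤ ∑ e ∈ T, c e := by
  obtain ⟨⟨hTA, hreach, _⟩, hcov⟩ := hT
  -- key claim: every S ∈ 𝓕 has an arc of T entering it
  have key : ∀ S ∈ 𝓕, ∃ e ∈ T, e ∈ deltaMinus A S := by
    intro S hS
    rw [h𝓕, Finset.mem_filter] at hS
    obtain ⟨-, hrS, f, hf⟩ := hS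
    rw [Finset.mem_filter] at hf
    -- some vertex of S is in V(T)
    have : ∃ w ∈ S, w ∈ vertexSet T := by
      rcases hcov f hf.1 with h | h
      · exact ⟨f.1, hf.2.1, h⟩
      · exact ⟨f.2, hf.2.2, h⟩
    obtain ⟨w, hwS, hwT⟩ := this
    have hr : Reaches T r w := hreach w hwT
    -- find crossing arc along the path
    have cross : ∀ v : V, Reaches T r v → v ∈ S →
        ∃ e ∈ T, e.1 ∉ S ∧ e.2 ∈ S := by
      intro v hv
      induction hv with
      | refl => intro h; exact absurd h hrS
      | tail _ hbc ih =>
        rename_i b c' _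
        intro hc'
        by_cases hb : b ∈ S
        · exact ih hb
        · exact ⟨(b, c'), hbc, hb, hc'⟩
    obtain ⟨e, heT, h1, h2⟩ := cross w hr hwS
    exact ⟨e, heT, by simp [deltaMinus, hTA heT, h1, h2]⟩
  calc ∑ S ∈ 𝓕, y S
      ≤ ∑ S ∈ 𝓕, ∑ e ∈ T, if e ∈ deltaMinus A S then y S else 0 := by
        apply Finset.sum_le_sum
        intro S hS
        obtain ⟨e, heT, hed⟩ := key S hS
        calc y S = (if e ∈ deltaMinus A S then y S else 0) := by simp [hed]
          _ ≤ ∑ e ∈ T, if e ∈ deltaMinus A S then y S else 0 :=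
            Finset.single_le_sum (f := fun f => if f ∈ deltaMinus A S then y S else 0)
              (fun f _ => by show 0 ≤ (if f ∈ deltaMinus A S then y S else 0); split_ifs; exacts [hy S hS, le_rfl]) heT
    _ = ∑ e ∈ T, ∑ S ∈ 𝓕, if e ∈ deltaMinus A S then y S else 0 := Finset.sum_comm
    _ ≤ ∑ e ∈ T, c e := by
        apply Finset.sum_le_sum
        intro e heT
        rw [← Finset.sum_filter]
        exact hfeas e (hTA heT)
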